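/- Suppose for each j ∈ {1,...,s} we have vectors x₁^j,...,xₙ^j in a finite-dimensional inner product space V_j with ‖xᵢ^j‖ ≤ 1, and convex bodies K^j ⊆ V_j each of Gaussian measure at least 1 - δ_j, with ∑ⱼ δ_j < 1/2. If Banaszczyk's vector balancing theorem holds (for any vectors of norm ≤ 1 and any symmetric convex body of Gaussian measure ≥ 1/2 there exist signs placing the signed sum in 5 times the body), then there exist signs σ₁,...,σₙ ∈ {-1,1} such that simultaneously for all j, ∑ᵢ σᵢ xᵢ^j ∈ 5√s · K^j. -/

import Mathlib

open MeasureTheory ProbabilityTheory Pointwise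

/-- The standard Gaussian measure on `EuclideanSpace ℝ (Fin D)`. -/
noncomputable def stdGaussian (D : ℕ) : Measure (EuclideanSpace ℝ (Fin D)) :=
  (Measure.pi fun _ : Fin D => gaussianReal 0 1).map (EuclideanSpace.equiv (Fin D) ℝ).symm

lemma stdGaussian_eq_map (D : ℕ) :
    stdGaussian D = (Measure.pi fun _ : Fin D => gaussianReal 0 1).map
      (MeasurableEquiv.toLp 2 (Fin D → ℝ)) := rfl

lemma aux_pi_ac {n : ℕ} (μ ν : Measure ℝ) [SigmaFinite μ] [SigmaFinite ν]
    (h : μ ≪ ν) : Measure.pi (fun _ : Fin n => μ) ≪ Measure.pi (fun _ : Fin n => ν) := by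
  induction n with
  | zero => rw [Measure.pi_of_empty, Measure.pi_of_empty]
  | succ m ih =>
    rw [← ((measurePreserving_piFinSuccAbove (fun _ : Fin (m+1) => μ) 0).symm
        (MeasurableEquiv.piFinSuccAbove (fun _ : Fin (m+1) => ℝ) 0)).map_eq,
      ← ((measurePreserving_piFinSuccAbove (fun _ : Fin (m+1) => ν) 0).symm
        (MeasurableEquiv.piFinSuccAbove (fun _ : Fin (m+1) => ℝ) 0)).map_eq]
    exact (h.prod ih).map (MeasurableEquiv.piFinSuccAbove (fun _ : Fin (m+1) => ℝ) 0).symm.measurable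

instance stdGaussian_isProb (D : ℕ) : IsProbabilityMeasure (stdGaussian D) := by
  rw [stdGaussian_eq_map]
  exact Measure.isProbabilityMeasure_map (MeasurableEquiv.toLp 2 (Fin D → ℝ)).measurable.aemeasurable

lemma stdGaussian_apply (D : ℕ) (S : Set (EuclideanSpace ℝ (Fin D))) :
    stdGaussian D S = (Measure.pi fun _ : Fin D => gaussianReal 0 1)
      ((MeasurableEquiv.toLp 2 (Fin D → ℝ)) ⁻¹' S) := by
  rw [stdGaussian_eq_map, MeasurableEquiv.map_apply]

lemma stdGaussian_ac (D : ℕ) : stdGaussian D ≪ (volume : Measure (EuclideanSpace ℝ (Fin D))) := by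
  rw [stdGaussian_eq_map,
    ← ((EuclideanSpace.volume_preserving_symm_measurableEquiv_toLp (Fin D)).symm).map_eq]
  refine Measure.AbsolutelyContinuous.map ?_
    (MeasurableEquiv.toLp 2 (Fin D → ℝ)).measurable
  rw [volume_pi]
  exact aux_pi_ac _ _ (gaussianReal_absolutelyContinuous 0 one_ne_zero)

lemma stdGaussian_nullMeasurable {D : ℕ} {K : Set (EuclideanSpace ℝ (Fin D))}
    (hK : Convex ℝ K) : NullMeasurableSet K (stdGaussian D) :=
  nullMeasurableSet_of_null_frontier (stdGaussian_ac D (hK.addHaar_frontier volume))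

lemma aux_pi_marginal {ι : Type*} [Fintype ι] {m : ℕ} (g : Fin m → ι)
    (hg : Function.Injective g) (γ : Measure ℝ) [IsProbabilityMeasure γ] :
    Measure.pi (fun _ : Fin m => γ) =
      (Measure.pi fun _ : ι => γ).map (fun y k => y (g k)) := by
  classical
  have hf : Measurable (fun (y : ι → ℝ) (k : Fin m) => y (g k)) :=
    measurable_pi_iff.mpr fun k => measurable_pi_apply _
  refine Measure.pi_eq fun t ht => ?_
  rw [Measure.map_apply hf (MeasurableSet.univ_pi ht)]
  set T : ι → Set ℝ := fun i => if h : ∃ k, g k = i then t h.choose else Set.univ with hT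
  have hTg : ∀ k, T (g k) = t k := by
    intro k
    have h : ∃ k', g k' = g k := ⟨k, rfl⟩
    have hck : h.choose = k := hg h.choose_spec
    simp only [hT, dif_pos h, hck]
  have hpre : (fun (y : ι → ℝ) (k : Fin m) => y (g k)) ⁻¹' Set.pi Set.univ t
      = Set.pi Set.univ T := by
    ext y
    simp only [Set.mem_preimage, Set.mem_univ_pi]
    constructor
    · intro hy i
      by_cases h : ∃ k, g k = i
      · have hc := h.choose_spec
        simp only [hT, dif_pos h]
        have := hy h.choose
        rwa [hc] at this
      · simp [hT, dif_neg h]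
    · intro hy k
      have := hy (g k)
      rwa [hTg k] at this
  rw [hpre, Measure.pi_pi]
  have hone : ∀ i ∈ Finset.univ, i ∉ Finset.univ.image g → γ (T i) = 1 := by
    intro i _ hi
    have h : ¬ ∃ k, g k = i := by
      rintro ⟨k, rfl⟩
      exact hi (Finset.mem_image.mpr ⟨k, Finset.mem_univ _, rfl⟩)
    simp [hT, dif_neg h]
  rw [← Finset.prod_subset (Finset.subset_univ (Finset.univ.image g)) hone,
    Finset.prod_image (fun a _ b _ h => hg h)]
  exact Finset.prod_congr rfl fun k _ => by rw [hTg k]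

/-- Simultaneous balancing: assuming Banaszczyk's vector balancing theorem, s sequences
of unit-norm vectors can be balanced simultaneously with respect to s convex bodies of
Gaussian measure 1 - δ_j (with ∑ δ_j < 1/2), at the cost of a √s blow-up. -/
theorem simultaneous_balancing
    (banaszczyk : ∀ (D n : ℕ) (x : Fin n → EuclideanSpace ℝ (Fin D))
      (K : Set (EuclideanSpace ℝ (Fin D))),
      (∀ i, ‖x i‖ ≤ 1) → Convex ℝ K → (∀ y ∈ K, -y ∈ K) →
      (1 / 2 : ENNReal) ≤ stdGaussian D K →
      ∃ σ : Fin n → ℝ, (∀ i, σ i = 1 ∨ σ i = -1) ∧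
        (∑ i, σ i • x i) ∈ (5 : ℝ) • K)
    (s n : ℕ) (D : Fin s → ℕ)
    (x : ∀ j, Fin n → EuclideanSpace ℝ (Fin (D j)))
    (hx : ∀ j i, ‖x j i‖ ≤ 1)
    (K : ∀ j, Set (EuclideanSpace ℝ (Fin (D j))))
    (hKconv : ∀ j, Convex ℝ (K j)) (hKsymm : ∀ j, ∀ y ∈ K j, -y ∈ K j)
    (δ : Fin s → ℝ) (hδ0 : ∀ j, 0 ≤ δ j)
    (hKmeas : ∀ j, ENNReal.ofReal (1 - δ j) ≤ stdGaussian (D j) (K j))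
    (hδ : ∑ j, δ j < 1 / 2) :
    ∃ σ : Fin n → ℝ, (∀ i, σ i = 1 ∨ σ i = -1) ∧
      ∀ j, (∑ i, σ i • x j i) ∈ (5 * Real.sqrt s) • K j := by
  classical
  rcases Nat.eq_zero_or_pos s with hs0 | hs
  · subst hs0
    exact ⟨fun _ => 1, fun _ => Or.inl rfl, fun j => j.elim0⟩
  have hsq : (0:ℝ) < Real.sqrt s := Real.sqrt_pos.mpr (by exact_mod_cast hs)
  set N := ∑ j, D j with hN
  have ecard : Fintype.card (Σ j : Fin s, Fin (D j)) = N := by simp [hN]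
  let e : (Σ j : Fin s, Fin (D j)) ≃ Fin N := Fintype.equivFinOfCardEq ecard
  let g : ∀ j, Fin (D j) → Fin N := fun j k => e ⟨j, k⟩
  have hg : ∀ j, Function.Injective (g j) := fun j => e.injective.comp sigma_mk_injective
  let P : ∀ j, EuclideanSpace ℝ (Fin N) →ₗ[ℝ] EuclideanSpace ℝ (Fin (D j)) := fun j =>
    { toFun := fun y => WithLp.toLp 2 (fun k => y (g j k))
      map_add' := fun y z => rfl
      map_smul' := fun c y => rfl }
  let xc : Fin n → EuclideanSpace ℝ (Fin N) := fun i => WithLp.toLp 2 (fun m => x (e.symm m).1 i (e.symm m).2)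
  have hPxc : ∀ j i, P j (xc i) = x j i := by
    intro j i
    ext k
    show xc i (e ⟨j, k⟩) = x j i k
    exact congrArg (fun p : Σ j : Fin s, Fin (D j) => x p.1 i p.2) (e.symm_apply_apply ⟨j, k⟩)
  -- the concatenated, rescaled vectors
  let x' : Fin n → EuclideanSpace ℝ (Fin N) := fun i => (Real.sqrt s)⁻¹ • xc i
  have hxc : ∀ i, ‖xc i‖ ≤ Real.sqrt s := by
    intro i
    rw [EuclideanSpace.norm_eq]
    apply Real.sqrt_le_sqrt
    have h1 : ∑ m, ‖xc i m‖ ^ 2 = ∑ p : Σ j : Fin s, Fin (D j), ‖x p.1 i p.2‖ ^ 2 :=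
      Fintype.sum_equiv e.symm _ _ (fun m => rfl)
    have h2 : ∑ p : Σ j : Fin s, Fin (D j), ‖x p.1 i p.2‖ ^ 2
        = ∑ j, ∑ k, ‖x j i k‖ ^ 2 := by
      rw [← Finset.univ_sigma_univ, Finset.sum_sigma]
    have h3 : ∀ j, ∑ k, ‖x j i k‖ ^ 2 = ‖x j i‖ ^ 2 := fun j => by
      rw [EuclideanSpace.norm_eq, Real.sq_sqrt (by positivity)]
    calc ∑ m, ‖xc i m‖ ^ 2 = ∑ j, ‖x j i‖ ^ 2 := by
          rw [h1, h2]; exact Finset.sum_congr rfl fun j _ => h3 j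
      _ ≤ ∑ _j : Fin s, (1 : ℝ) := Finset.sum_le_sum fun j _ => by
          nlinarith [norm_nonneg (x j i), hx j i]
      _ = s := by simp
  have hx' : ∀ i, ‖x' i‖ ≤ 1 := by
    intro i
    have : ‖x' i‖ = (Real.sqrt s)⁻¹ * ‖xc i‖ := by
      rw [norm_smul, Real.norm_eq_abs, abs_of_nonneg (inv_nonneg.mpr hsq.le)]
    rw [this]
    calc (Real.sqrt s)⁻¹ * ‖xc i‖ ≤ (Real.sqrt s)⁻¹ * Real.sqrt s :=
          mul_le_mul_of_nonneg_left (hxc i) (inv_nonneg.mpr hsq.le)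
      _ = 1 := inv_mul_cancel₀ hsq.ne'
  -- the intersected body
  let K' : Set (EuclideanSpace ℝ (Fin N)) := ⋂ j, P j ⁻¹' K j
  have hK'conv : Convex ℝ K' := convex_iInter fun j => (hKconv j).linear_preimage (P j)
  have hK'symm : ∀ y ∈ K', -y ∈ K' := by
    intro y hy
    refine Set.mem_iInter.mpr fun j => ?_
    have hyj := Set.mem_iInter.mp hy j
    show P j (-y) ∈ K j
    rw [map_neg]
    exact hKsymm j _ hyj
  -- each δ_j is at most 1
  have hδj1 : ∀ j, δ j ≤ 1 := by
    intro j
    have := Finset.single_le_sum (fun i (_ : i ∈ Finset.univ) => hδ0 i) (Finset.mem_univ j)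
    linarith
  -- marginal bound
  have hmarg : ∀ j (C : Set (EuclideanSpace ℝ (Fin (D j)))),
      stdGaussian N ((P j) ⁻¹' C) ≤ stdGaussian (D j) C := by
    intro j C
    rw [stdGaussian_apply, stdGaussian_apply]
    have hQ : Measurable (fun (y : Fin N → ℝ) (k : Fin (D j)) => y (g j k)) :=
      measurable_pi_iff.mpr fun k => measurable_pi_apply _
    have hset : (⇑(MeasurableEquiv.toLp 2 (Fin N → ℝ)) ⁻¹' ((P j) ⁻¹' C))
        = (fun (y : Fin N → ℝ) (k : Fin (D j)) => y (g j k)) ⁻¹'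
          (⇑(MeasurableEquiv.toLp 2 (Fin (D j) → ℝ)) ⁻¹' C) := rfl
    rw [hset, aux_pi_marginal (g j) (hg j) (gaussianReal 0 1)]
    exact Measure.le_map_apply hQ.aemeasurable _
  -- per-body complement bound
  have hKc : ∀ j, stdGaussian (D j) (K j)ᶜ ≤ ENNReal.ofReal (δ j) := by
    intro j
    rw [measure_compl₀ (stdGaussian_nullMeasurable (hKconv j)) (measure_ne_top _ _),
      measure_univ]
    calc (1:ENNReal) - stdGaussian (D j) (K j)
        ≤ 1 - ENNReal.ofReal (1 - δ j) := tsub_le_tsub_left (hKmeas j) 1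
      _ = ENNReal.ofReal (δ j) := by
          rw [show (1:ENNReal) = ENNReal.ofReal 1 from ENNReal.ofReal_one.symm,
            ← ENNReal.ofReal_sub 1 (by linarith [hδj1 j] : (0:ℝ) ≤ 1 - δ j)]
          norm_num
  -- complement of the intersected body
  have hcompl : stdGaussian N K'ᶜ ≤ ENNReal.ofReal (∑ j, δ j) := by
    have hU : K'ᶜ = ⋃ j, ((P j) ⁻¹' (K j))ᶜ := by
      simp [K', Set.compl_iInter]
    calc stdGaussian N K'ᶜ ≤ ∑ j, stdGaussian N (((P j) ⁻¹' (K j))ᶜ) := by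
          rw [hU]; exact measure_iUnion_fintype_le _ _
      _ ≤ ∑ j, ENNReal.ofReal (δ j) := Finset.sum_le_sum fun j _ => by
          rw [← Set.preimage_compl]
          exact le_trans (hmarg j (K j)ᶜ) (hKc j)
      _ = ENNReal.ofReal (∑ j, δ j) :=
          (ENNReal.ofReal_sum_of_nonneg fun j _ => hδ0 j).symm
  -- Gaussian measure of intersected body is at least 1/2
  have hhalf : (1/2 : ENNReal) ≤ stdGaussian N K' := by
    have h1 : (1:ENNReal) ≤ stdGaussian N K' + stdGaussian N K'ᶜ := by
      calc (1:ENNReal) = stdGaussian N Set.univ := measure_univ.symm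
        _ = stdGaussian N (K' ∪ K'ᶜ) := by rw [Set.union_compl_self]
        _ ≤ _ := measure_union_le _ _
    have h2 : stdGaussian N K'ᶜ ≤ 1/2 := by
      refine le_trans hcompl ?_
      calc ENNReal.ofReal (∑ j, δ j) ≤ ENNReal.ofReal (1/2) :=
            ENNReal.ofReal_le_ofReal hδ.le
        _ = 1/2 := by
            rw [one_div, ENNReal.ofReal_inv_of_pos two_pos, ENNReal.ofReal_ofNat, one_div]
    have h3 : (1:ENNReal) - 1/2 ≤ stdGaussian N K' :=
      tsub_le_iff_right.mpr (le_trans h1 (add_le_add_right h2 _))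
    calc (1/2 : ENNReal) = 1 - 1/2 := by
          rw [one_div, ENNReal.one_sub_inv_two]
      _ ≤ _ := h3
  obtain ⟨σ, hσ, hmem⟩ := banaszczyk N n x' K' hx' hK'conv hK'symm hhalf
  rw [Set.mem_smul_set] at hmem
  obtain ⟨z, hzK, hz⟩ := hmem
  refine ⟨σ, hσ, fun j => ?_⟩
  have hPz : P j z ∈ K j := Set.mem_iInter.mp hzK j
  have hL : P j (∑ i, σ i • x' i) = (Real.sqrt s)⁻¹ • ∑ i, σ i • x j i := by
    rw [map_sum]
    have hterm : ∀ i, P j (σ i • x' i) = σ i • ((Real.sqrt s)⁻¹ • x j i) := by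
      intro i
      rw [_root_.map_smul]
      congr 1
      show P j ((Real.sqrt s)⁻¹ • xc i) = _
      rw [_root_.map_smul, hPxc]
    simp_rw [hterm]
    rw [Finset.smul_sum]
    exact Finset.sum_congr rfl fun i _ => smul_comm _ _ _
  have key : (5:ℝ) • P j z = (Real.sqrt s)⁻¹ • ∑ i, σ i • x j i := by
    rw [← _root_.map_smul, hz, hL]
  have hfin : ∑ i, σ i • x j i = (5 * Real.sqrt s) • P j z := by
    have h4 := congrArg (fun v => Real.sqrt s • v) key
    simp only [smul_smul] at h4
    rw [mul_inv_cancel₀ hsq.ne', one_smul] at h4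
    rw [← h4, mul_comm]
  rw [hfin]
  exact Set.smul_mem_smul_set hPz
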